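/- Let U ⊆ ℝ² be open, θ ≠ 0, and π : U → (0,1) twice continuously differentiable. Suppose there exist functions g₁, g₂ : ℝ → ℝ with φ_θ(π(z₁,z₂)) = g₁(z₁) + g₂(z₂) on U, where φ_θ(s) = (s^{−θ} − 1)/θ is the Clayton generator. Then at every point of U: π·(∂²π/∂z₁∂z₂) = (θ+1)·(∂π/∂z₁)·(∂π/∂z₂); in particular, wherever the partial derivatives of π in z₁ and z₂ are nonzero, θ = π·(∂²π/∂z₁∂z₂)/((∂π/∂z₁)·(∂π/∂z₂)) − 1. -/

import Mathlib

open Set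

/-- Example 1 of the paper (Clayton copula): if `φ_θ ∘ π` is additively separable on an open set
`U ⊆ ℝ²`, where `φ_θ(s) = (s^{-θ} - 1)/θ` is the Clayton generator (`θ ≠ 0`) and
`π : U → (0,1)` is twice continuously differentiable, then on `U`
`π·π₁₂ = (θ+1)·π₁·π₂`; in particular, wherever `π₁ ≠ 0` and `π₂ ≠ 0`,
`θ = π·π₁₂/(π₁·π₂) - 1`. -/
theorem clayton_identification
    (U : Set (ℝ × ℝ)) (hU : IsOpen U) (θ : ℝ) (hθ : θ ≠ 0)
    (π π₁ π₂ π₁₂ : ℝ × ℝ → ℝ)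
    (hπmem : ∀ p ∈ U, π p ∈ Ioo (0:ℝ) 1)
    (hπ₁ : ∀ p ∈ U, HasDerivAt (fun x => π (x, p.2)) (π₁ p) p.1)
    (hπ₂ : ∀ p ∈ U, HasDerivAt (fun y => π (p.1, y)) (π₂ p) p.2)
    (hπ₁₂ : ∀ p ∈ U, HasDerivAt (fun y => π₁ (p.1, y)) (π₁₂ p) p.2)
    (hπ₁₂cont : ContinuousOn π₁₂ U)
    (g₁ g₂ : ℝ → ℝ)
    (hsep : ∀ p ∈ U, (π p ^ (-θ) - 1) / θ = g₁ p.1 + g₂ p.2) :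
    ∀ p ∈ U,
      π p * π₁₂ p = (θ + 1) * (π₁ p * π₂ p) ∧
      (π₁ p ≠ 0 → π₂ p ≠ 0 →
        θ = π p * π₁₂ p / (π₁ p * π₂ p) - 1) := by
  intro p hp
  -- h is the partial derivative in the first variable of the Clayton transform
  set h : ℝ × ℝ → ℝ := fun q => -(π q ^ (-θ - 1)) * π₁ q with hh
  -- derivative of x ↦ (π(x,y)^(-θ)-1)/θ is h(x,y)
  have hF : ∀ q ∈ U, HasDerivAt (fun x => (π (x, q.2) ^ (-θ) - 1) / θ) (h q) q.1 := by
    intro q hq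
    have hpos := (hπmem q hq).1
    have hd := ((HasDerivAt.rpow_const (p := -θ) (hπ₁ q hq) (Or.inl (ne_of_gt hpos))).sub_const 1).div_const θ
    refine hd.congr_deriv ?_
    field_simp [hh]
    ring
  -- find a ball around p inside U
  obtain ⟨ε, hε, hball⟩ := Metric.isOpen_iff.1 hU p hp
  have hmem2 : ∀ x y : ℝ, dist x p.1 < ε → dist y p.2 < ε → (x, y) ∈ U := by
    intro x y hx hy
    apply hball
    rw [Metric.mem_ball, Prod.dist_eq]
    exact max_lt hx hy
  -- h(p.1, y) = h(p.1, p.2) for y near p.2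
  have hconst : ∀ y : ℝ, dist y p.2 < ε → h (p.1, y) = h (p.1, p.2) := by
    intro y hy
    have hy0 : (p.1, y) ∈ U := hmem2 p.1 y (by simpa using hε) hy
    have hp0 : (p.1, p.2) ∈ U := by simpa using hp
    -- the function x ↦ F(x,y) - F(x,p.2) is locally constant
    have hev : (fun x => (π (x, y) ^ (-θ) - 1) / θ - (π (x, p.2) ^ (-θ) - 1) / θ)
        =ᶠ[nhds p.1] fun _ => g₂ y - g₂ p.2 := by
      have : ∀ᶠ x in nhds p.1, dist x p.1 < ε :=
        Metric.eventually_nhds_iff_ball.2 ⟨ε, hε, fun x hx => by simpa [Metric.mem_ball] using hx⟩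
      filter_upwards [this] with x hx
      have h1 := hsep (x, y) (hmem2 x y hx hy)
      have h2 := hsep (x, p.2) (hmem2 x p.2 hx (by simpa using hε))
      simp only at h1 h2
      rw [h1, h2]; ring
    have hzero : HasDerivAt
        (fun x => (π (x, y) ^ (-θ) - 1) / θ - (π (x, p.2) ^ (-θ) - 1) / θ) 0 p.1 :=
      (hasDerivAt_const p.1 (g₂ y - g₂ p.2)).congr_of_eventuallyEq hev
    have hder : HasDerivAt
        (fun x => (π (x, y) ^ (-θ) - 1) / θ - (π (x, p.2) ^ (-θ) - 1) / θ)
        (h (p.1, y) - h (p.1, p.2)) p.1 := (hF (p.1, y) hy0).sub (hF (p.1, p.2) hp0)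
    have := hzero.unique hder
    linarith [this]
  -- hence y ↦ h(p.1,y) has derivative 0 at p.2
  have hzero2 : HasDerivAt (fun y => h (p.1, y)) 0 p.2 := by
    have hev : (fun y => h (p.1, y)) =ᶠ[nhds p.2] fun _ => h (p.1, p.2) := by
      have : ∀ᶠ y in nhds p.2, dist y p.2 < ε :=
        Metric.eventually_nhds_iff_ball.2 ⟨ε, hε, fun y hy => by simpa [Metric.mem_ball] using hy⟩
      filter_upwards [this] with y hy
      exact hconst y hy
    exact (hasDerivAt_const p.2 (h (p.1, p.2))).congr_of_eventuallyEq hev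
  -- compute the derivative of y ↦ h(p.1,y) directly
  have hpos := (hπmem p hp).1
  have hπ₂' : HasDerivAt (fun y => π (p.1, y)) (π₂ p) p.2 := hπ₂ p hp
  have hπ₁₂' : HasDerivAt (fun y => π₁ (p.1, y)) (π₁₂ p) p.2 := hπ₁₂ p hp
  have hrp : HasDerivAt (fun y => -(π (p.1, y) ^ (-θ - 1)))
      (-(π₂ p * ((-θ - 1) * π (p.1, p.2) ^ (-θ - 1 - 1)))) p.2 := by
    have := (HasDerivAt.rpow_const (p := -θ - 1) hπ₂' (Or.inl (ne_of_gt (by simpa using hpos)))).neg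
    refine this.congr_deriv ?_
    ring
  have hderh : HasDerivAt (fun y => h (p.1, y))
      (-(π₂ p * ((-θ - 1) * π (p.1, p.2) ^ (-θ - 1 - 1))) * π₁ (p.1, p.2)
        + -(π (p.1, p.2) ^ (-θ - 1)) * π₁₂ p) p.2 := by
    simpa [hh, Pi.mul_def] using hrp.mul hπ₁₂'
  have hE := hzero2.unique hderh
  -- rewrite powers: let a = π p > 0
  have hpe : (p.1, p.2) = p := by ext <;> rfl
  rw [hpe] at hE
  set a := π p with ha
  have hX : (0:ℝ) < a ^ (-θ - 1 - 1) := Real.rpow_pos_of_pos hpos _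
  have hY : a ^ (-θ - 1) = a ^ (-θ - 1 - 1) * a := by
    rw [← Real.rpow_add_one (ne_of_gt hpos)]
    ring_nf
  rw [hY] at hE
  have key : π p * π₁₂ p = (θ + 1) * (π₁ p * π₂ p) := by
    have h2 : a ^ (-θ - 1 - 1) * ((θ + 1) * (π₁ p * π₂ p) - a * π₁₂ p) = 0 := by
      linear_combination -hE
    have h3 : (θ + 1) * (π₁ p * π₂ p) - a * π₁₂ p = 0 := by
      rcases mul_eq_zero.1 h2 with h | h
      · exact absurd h (ne_of_gt hX)
      · exact h
    linarith
  refine ⟨key, fun h1 h2 => ?_⟩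
  rw [key, mul_div_assoc, div_self (mul_ne_zero h1 h2)]
  ring
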